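/- Let p₁ < p₂ < ⋯ < p_S be strictly increasing pivot values (stored in safe memory, hence never corrupted), and let B₀, B₁, …, B_{S−1} be lists over the same linear order, each B_i faithfully ordered with respect to a corrupted-position set C_i. Suppose every faithful value of B₀ is strictly less than p₁ and, for 1 ≤ i ≤ S−1, every faithful value of B_i lies strictly between p_i and p_{i+1}. Then the interleaved concatenation B₀ ++ [p₁] ++ B₁ ++ [p₂] ++ ⋯ ++ B_{S−1} ++ [p_S] is faithfully ordered with respect to the induced corrupted-position set (the union of the shifted C_i; the pivot positions are faithful). -/
import Mathlib


/-- A list `l` in unreliable memory is faithfully ordered with respect to the set `C`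
of corrupted positions if the entries at faithful (non-corrupted) positions appear in
strictly increasing order. -/
def FaithfullyOrdered {α : Type*} [LinearOrder α] (l : List α) (C : Set ℕ) : Prop :=
  ∀ (i j : ℕ) (hi : i < l.length) (hj : j < l.length),
    i < j → i ∉ C → j ∉ C → l[i] < l[j]

lemma FO_append {α : Type*} [LinearOrder α] (l₁ l₂ : List α) (C₁ C₂ : Set ℕ)
    (h₁ : FaithfullyOrdered l₁ C₁) (h₂ : FaithfullyOrdered l₂ C₂)
    (hcross : ∀ (i : ℕ) (hi : i < l₁.length), i ∉ C₁ →
      ∀ (j : ℕ) (hj : j < l₂.length), j ∉ C₂ → l₁[i] < l₂[j]) :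
    FaithfullyOrdered (l₁ ++ l₂) (C₁ ∪ ((fun c => l₁.length + c) '' C₂)) := by
  intro i j hi hj hij hiC hjC
  simp only [List.length_append] at hi hj
  have him : ∀ k, k ∉ C₁ ∪ ((fun c => l₁.length + c) '' C₂) → k < l₁.length → k ∉ C₁ := by
    intro k hk _ hkC₁; exact hk (Or.inl hkC₁)
  have him2 : ∀ k, k ∉ C₁ ∪ ((fun c => l₁.length + c) '' C₂) → l₁.length ≤ k →
      k - l₁.length ∉ C₂ := by
    intro k hk hle hkC₂
    exact hk (Or.inr ⟨k - l₁.length, hkC₂, by simp; omega⟩)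
  by_cases h1 : i < l₁.length
  · by_cases h2 : j < l₁.length
    · rw [List.getElem_append_left h1, List.getElem_append_left h2]
      exact h₁ i j h1 h2 hij (him i hiC h1) (him j hjC h2)
    · push_neg at h2
      rw [List.getElem_append_left h1, List.getElem_append_right h2]
      exact hcross i h1 (him i hiC h1) _ (by omega) (him2 j hjC h2)
  · push_neg at h1
    have h2 : l₁.length ≤ j := by omega
    rw [List.getElem_append_right h1, List.getElem_append_right h2]
    exact h₂ _ _ (by omega) (by omega) (by omega) (him2 i hiC h1) (him2 j hjC h2)

lemma bucket_aux {α : Type*} [LinearOrder α] (p : ℕ → α) (B : ℕ → List α) (C : ℕ → Set ℕ) :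
    ∀ S : ℕ, (∀ i, i + 1 < S → p i < p (i + 1)) →
    (∀ i, i < S → FaithfullyOrdered (B i) (C i)) →
    (∀ i, i < S → ∀ (j : ℕ) (hj : j < (B i).length), j ∉ C i → (B i)[j] < p i) →
    (∀ i, 0 < i → i < S →
      ∀ (j : ℕ) (hj : j < (B i).length), j ∉ C i → p (i - 1) < (B i)[j]) →
    (((List.range S).map (fun i => B i ++ [p i])).flatten).length
        = ∑ j ∈ Finset.range S, ((B j).length + 1) ∧
    FaithfullyOrdered (((List.range S).map (fun i => B i ++ [p i])).flatten)
      (⋃ i, ⋃ (_ : i < S),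
        (fun c => (∑ j ∈ Finset.range i, ((B j).length + 1)) + c) ''
          (C i ∩ Set.Iio (B i).length)) ∧
    (∀ (k : ℕ) (hk : k < (((List.range S).map (fun i => B i ++ [p i])).flatten).length),
      k ∉ (⋃ i, ⋃ (_ : i < S),
        (fun c => (∑ j ∈ Finset.range i, ((B j).length + 1)) + c) ''
          (C i ∩ Set.Iio (B i).length)) →
      (((List.range S).map (fun i => B i ++ [p i])).flatten)[k] ≤ p (S - 1)) := by
  intro S
  induction S with
  | zero =>
    intro _ _ _ _
    refine ⟨by simp, ?_, ?_⟩ <;> intro i <;> simp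
  | succ S ih =>
    intro hp hB hlt hgt
    obtain ⟨hlen, hFO, hbd⟩ := ih
      (fun i h => hp i (h.trans (Nat.lt_succ_self S)))
      (fun i h => hB i (h.trans (Nat.lt_succ_self S)))
      (fun i h => hlt i (h.trans (Nat.lt_succ_self S)))
      (fun i h0 h => hgt i h0 (h.trans (Nat.lt_succ_self S)))
    set L := ((List.range S).map (fun i => B i ++ [p i])).flatten with hL
    set CU := (⋃ i, ⋃ (_ : i < S),
        (fun c => (∑ j ∈ Finset.range i, ((B j).length + 1)) + c) ''
          (C i ∩ Set.Iio (B i).length)) with hCU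
    have hflat : ((List.range (S+1)).map (fun i => B i ++ [p i])).flatten
        = L ++ (B S ++ [p S]) := by
      simp [hL, List.range_succ]
    have hCU' : (⋃ i, ⋃ (_ : i < S + 1),
        (fun c => (∑ j ∈ Finset.range i, ((B j).length + 1)) + c) ''
          (C i ∩ Set.Iio (B i).length))
        = CU ∪ ((fun c => L.length + c) '' (C S ∩ Set.Iio (B S).length)) := by
      rw [Set.biUnion_lt_succ, hlen]
    -- faithfulness of the last block
    have hFO2 : FaithfullyOrdered (B S ++ [p S]) (C S ∩ Set.Iio (B S).length) := by
      intro i j hi hj hij hiC hjC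
      simp only [List.length_append, List.length_singleton] at hi hj
      have hi' : i < (B S).length := by omega
      have hiC' : i ∉ C S := fun h => hiC ⟨h, hi'⟩
      rw [List.getElem_append_left hi']
      by_cases hj' : j < (B S).length
      · rw [List.getElem_append_left hj']
        exact hB S (Nat.lt_succ_self S) i j hi' hj' hij hiC' (fun h => hjC ⟨h, hj'⟩)
      · have : j = (B S).length := by omega
        subst this
        rw [List.getElem_append_right (le_refl _)]
        simpa using hlt S (Nat.lt_succ_self S) i hi' hiC'
    -- every faithful value of the last block is > p (S-1), when S ≥ 1
    have hbig : 0 < S → ∀ (j : ℕ) (hj : j < (B S ++ [p S]).length),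
        j ∉ C S ∩ Set.Iio (B S).length → p (S - 1) < (B S ++ [p S])[j] := by
      intro hS j hj hjC
      simp only [List.length_append, List.length_singleton] at hj
      by_cases hj' : j < (B S).length
      · rw [List.getElem_append_left hj']
        exact hgt S hS (Nat.lt_succ_self S) j hj' (fun h => hjC ⟨h, hj'⟩)
      · have : j = (B S).length := by omega
        subst this
        rw [List.getElem_append_right (le_refl _)]
        have h := hp (S - 1) (by omega)
        rw [(by omega : S - 1 + 1 = S)] at h
        simpa using h
    refine ⟨?_, ?_, ?_⟩
    · rw [hflat]; simp [hlen, Finset.sum_range_succ]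
    · rw [hflat, hCU']
      apply FO_append _ _ _ _ hFO hFO2
      intro i hi hiC j hj hjC
      have hS : 0 < S := by
        rcases Nat.eq_zero_or_pos S with h | h
        · subst h; simp [hL] at hi
        · exact h
      exact lt_of_le_of_lt (hbd i hi hiC) (hbig hS j hj hjC)
    · intro k hk hkC
      simp only [hflat] at hk ⊢
      rw [hCU'] at hkC
      simp only [List.length_append] at hk
      simp only [Nat.add_sub_cancel]
      have hkC₁ : k < L.length → k ∉ CU := fun _ h => hkC (Or.inl h)
      have hkC₂ : L.length ≤ k → k - L.length ∉ C S ∩ Set.Iio (B S).length := by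
        intro hle h
        refine hkC (Or.inr ⟨k - L.length, h, ?_⟩)
        show L.length + (k - L.length) = k
        omega
      by_cases h1 : k < L.length
      · rw [List.getElem_append_left h1]
        have hS : 0 < S := by
          rcases Nat.eq_zero_or_pos S with h | h
          · subst h; simp [hL] at h1
          · exact h
        have h := hp (S - 1) (by omega)
        rw [(by omega : S - 1 + 1 = S)] at h
        exact le_of_lt (lt_of_le_of_lt (hbd k h1 (hkC₁ h1)) h)
      · push_neg at h1
        rw [List.getElem_append_right h1]
        have hj : k - L.length < (B S).length + 1 := by
          simp only [List.length_singleton] at hk; omega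
        by_cases hj' : k - L.length < (B S).length
        · rw [List.getElem_append_left hj']
          exact le_of_lt (hlt S (Nat.lt_succ_self S) _ hj'
            (fun h => hkC₂ h1 ⟨h, hj'⟩))
        · have : k - L.length = (B S).length := by
            simp only [List.length_append, List.length_singleton] at hk; omega
          rw [List.getElem_append_right (by omega)]
          have hidx : k - L.length - (B S).length = 0 := by omega
          simp [hidx]

/-- interleaving the buckets `B 0, …, B (S-1)` with the strictly increasing
(safe, hence faithful) pivots `p 0 < p 1 < ⋯ < p (S-1)`, where all faithful values of
`B 0` are below `p 0` and all faithful values of `B i` (for `0 < i < S`) lie strictly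
between `p (i-1)` and `p i`, yields a faithfully ordered list with respect to the
induced corrupted-position set. -/
theorem bucket_interleaving_faithfullyOrdered {α : Type*} [LinearOrder α]
    (S : ℕ) (p : ℕ → α) (B : ℕ → List α) (C : ℕ → Set ℕ)
    (hp : ∀ i, i + 1 < S → p i < p (i + 1))
    (hB : ∀ i, i < S → FaithfullyOrdered (B i) (C i))
    (hlt : ∀ i, i < S → ∀ (j : ℕ) (hj : j < (B i).length), j ∉ C i → (B i)[j] < p i)
    (hgt : ∀ i, 0 < i → i < S →
      ∀ (j : ℕ) (hj : j < (B i).length), j ∉ C i → p (i - 1) < (B i)[j]) :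
    FaithfullyOrdered (((List.range S).map (fun i => B i ++ [p i])).flatten)
      (⋃ i, ⋃ (_ : i < S),
        (fun c => (∑ j ∈ Finset.range i, ((B j).length + 1)) + c) ''
          (C i ∩ Set.Iio (B i).length)) := by
  exact (bucket_aux p B C S hp hB hlt hgt).2.1
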